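/- For every complex number s with Re(s) > 1/2, the integral ∫_ℝ (x² + 1)^{(1/2) − s}/(x + i) dx converges absolutely and equals −i·√π·Γ(s)/Γ(s + 1/2), where Γ denotes the complex Gamma function, i is the imaginary unit, and (x²+1)^{(1/2)−s} is the complex power of the positive real number x²+1. -/

import Mathlib

open MeasureTheory Set Complex in
private lemma whittaker_cpow_ofReal_inv {r : ℝ} (hr : 0 < r) (w : ℂ) :
    ((r⁻¹ : ℝ) : ℂ) ^ w = ((r : ℂ) ^ w)⁻¹ := by
  rw [ofReal_inv, inv_cpow]
  rw [arg_ofReal_of_nonneg hr.le]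
  exact Real.pi_ne_zero.symm

open MeasureTheory Set Complex in
private lemma whittaker_sq_image :
    (fun x : ℝ => (1 + x ^ 2)⁻¹) '' Ioi 0 = Ioo 0 1 := by
  ext t
  constructor
  · rintro ⟨x, hx, rfl⟩
    have h1 : (0:ℝ) < 1 + x ^ 2 := by positivity
    have hx0 : (0:ℝ) < x := hx
    constructor
    · positivity
    · rw [inv_lt_one_iff₀]; right; nlinarith
  · rintro ⟨ht0, ht1⟩
    refine ⟨Real.sqrt (1/t - 1), ?_, ?_⟩
    · have : 0 < 1/t - 1 := by
        rw [sub_pos, lt_div_iff₀ ht0]; simpa using ht1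
      simpa [mem_Ioi] using Real.sqrt_pos.mpr this
    · have h0 : (0:ℝ) ≤ 1/t - 1 := by
        rw [sub_nonneg, le_div_iff₀ ht0]; simpa using ht1.le
      simp only
      rw [Real.sq_sqrt h0]
      field_simp
      ring

open MeasureTheory Set Complex in
private lemma whittaker_pointwise_cv (s : ℂ) {x : ℝ} (hx : 0 < x) :
    |(-(2*x)/(1+x^2)^2)| • ((((1+x^2)⁻¹ : ℝ) : ℂ) ^ (s-1) *
      (1 - (((1+x^2)⁻¹ : ℝ) : ℂ)) ^ ((1/2 : ℂ) - 1))
    = 2 * ((1 + x^2 : ℝ) : ℂ) ^ (-(s + 1/2)) := by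
  set r : ℝ := 1 + x^2 with hrdef
  have hr : 0 < r := by positivity
  have hrC : (r:ℂ) ≠ 0 := by exact_mod_cast hr.ne'
  have hxC : (x:ℂ) ≠ 0 := by exact_mod_cast hx.ne'
  have habs : |(-(2*x)/r^2)| = 2*x/r^2 := by
    rw [abs_div, abs_neg, _root_.abs_of_nonneg (by positivity : (0:ℝ) ≤ 2*x),
      _root_.abs_of_nonneg (by positivity : (0:ℝ) ≤ r^2)]
  have h1r : (1 : ℂ) - ((r⁻¹ : ℝ) : ℂ) = ((x^2 * r⁻¹ : ℝ) : ℂ) := by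
    push_cast
    field_simp
    rw [hrdef]; push_cast; ring
  have hexp : ((1/2 : ℂ) - 1) = ((-(1/2) : ℝ) : ℂ) := by norm_num
  have hreal : (x^2 * r⁻¹ : ℝ) ^ (-(1/2) : ℝ) = x⁻¹ * r ^ ((1/2):ℝ) := by
    rw [Real.mul_rpow (by positivity) (by positivity), Real.inv_rpow hr.le,
      Real.rpow_neg hr.le, inv_inv, ← Real.rpow_natCast x 2,
      ← Real.rpow_mul hx.le]
    norm_num
    exact Or.inl (Real.rpow_neg_one x)
  have h2 : (1 - (((r⁻¹ : ℝ)) : ℂ)) ^ ((1/2 : ℂ) - 1)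
      = (x:ℂ)⁻¹ * (r:ℂ) ^ ((1/2 : ℂ)) := by
    rw [h1r, hexp, ← Complex.ofReal_cpow (by positivity), hreal]
    push_cast
    rw [Complex.ofReal_cpow hr.le]
    norm_num
  have h3 : (((r⁻¹ : ℝ)) : ℂ) ^ (s-1) = (r:ℂ) ^ (-(s-1)) := by
    rw [whittaker_cpow_ofReal_inv hr, ← Complex.cpow_neg]
  rw [habs, h2, h3, Complex.real_smul]
  have h4 : (r:ℂ) ^ (-(s-1)) * (r:ℂ) ^ ((1/2:ℂ)) = (r:ℂ) ^ (-(s+1/2)) * (r:ℂ)^(2:ℕ) := by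
    have hE : (-(s-1) + 1/2 : ℂ) = -(s+1/2) + (2:ℕ) := by push_cast; ring
    rw [← Complex.cpow_add _ _ hrC, hE, Complex.cpow_add _ _ hrC, Complex.cpow_natCast]
  push_cast
  rw [mul_comm ((x:ℂ)⁻¹) _]
  rw [← mul_assoc ((r:ℂ) ^ (-(s-1))) ((r:ℂ) ^ ((1/2:ℂ))) ((x:ℂ)⁻¹), h4]
  field_simp

open MeasureTheory Set Complex in
private lemma whittaker_norm_f {x : ℝ} (s : ℂ) :
    ‖((x : ℂ) ^ 2 + 1) ^ ((1 / 2 : ℂ) - s) / (x + Complex.I)‖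
      = (1 + x ^ 2) ^ (-s.re) := by
  have hb : ((x : ℂ) ^ 2 + 1) = ((1 + x ^ 2 : ℝ) : ℂ) := by push_cast; ring
  have h1 : (0:ℝ) < 1 + x ^ 2 := by positivity
  have hden : ‖(x : ℂ) + Complex.I‖ = Real.sqrt (1 + x ^ 2) := by
    rw [Complex.norm_def, Complex.normSq_apply]
    norm_num [add_comm]
    ring_nf
  rw [norm_div, hb, Complex.norm_cpow_eq_rpow_re_of_pos h1, hden,
    Real.sqrt_eq_rpow, ← Real.rpow_sub h1]
  norm_num

open MeasureTheory Set Complex in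
private lemma whittaker_integrable_f (s : ℂ) (hs : 1 / 2 < s.re) :
    Integrable (fun x : ℝ => ((x : ℂ) ^ 2 + 1) ^ ((1 / 2 : ℂ) - s) / (x + Complex.I)) := by
  have hg : Integrable (fun x : ℝ => (1 + x ^ 2) ^ (-(2*s.re)/2) : ℝ → ℝ) := by
    have := integrable_rpow_neg_one_add_norm_sq (E := ℝ) (μ := volume) (r := 2*s.re)
      (by simp; linarith)
    simpa using this
  refine hg.mono' ?_ (Filter.Eventually.of_forall fun x => ?_)
  · apply Continuous.aestronglyMeasurable
    apply Continuous.div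
    · apply Continuous.cpow (by continuity) continuous_const
      intro x
      refine Or.inl ?_
      have : ((x : ℂ) ^ 2 + 1).re = x ^ 2 + 1 := by
        simp [Complex.add_re, ← Complex.ofReal_pow]
      rw [this]; positivity
    · continuity
    · intro x h
      have := congrArg Complex.im h
      simp at this
  · rw [whittaker_norm_f]
    have : -(2*s.re)/2 = -s.re := by ring
    rw [this]

open MeasureTheory Set Complex in
private lemma whittaker_integrable_G (s : ℂ) (hs : 1 / 2 < s.re) :
    Integrable (fun x : ℝ => ((1 + x ^ 2 : ℝ) : ℂ) ^ (-(s + 1/2))) := by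
  have hg : Integrable (fun x : ℝ => (1 + x ^ 2) ^ (-(2*s.re)/2) : ℝ → ℝ) := by
    have := integrable_rpow_neg_one_add_norm_sq (E := ℝ) (μ := volume) (r := 2*s.re)
      (by simp; linarith)
    simpa using this
  refine hg.mono' ?_ (Filter.Eventually.of_forall fun x => ?_)
  · apply Continuous.aestronglyMeasurable
    apply Continuous.cpow (by continuity) continuous_const
    intro x
    refine Or.inl ?_
    rw [Complex.ofReal_re]; positivity
  · have h1 : (0:ℝ) < 1 + x ^ 2 := by positivity
    rw [Complex.norm_cpow_eq_rpow_re_of_pos h1]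
    have hE : -(2*s.re)/2 = -s.re := by ring
    rw [hE]
    have : (-(s + 1/2)).re = -(s.re + 1/2) := by
      simp [Complex.add_re]
    rw [this]
    exact Real.rpow_le_rpow_of_exponent_le (by nlinarith) (by linarith)

open MeasureTheory Set Complex in
private lemma whittaker_f_rewrite (s : ℂ) (x : ℝ) :
    ((x : ℂ) ^ 2 + 1) ^ ((1 / 2 : ℂ) - s) / (x + Complex.I)
      = ((x : ℂ) - Complex.I) * ((1 + x ^ 2 : ℝ) : ℂ) ^ (-(s + 1/2)) := by
  have h1 : (0:ℝ) < 1 + x ^ 2 := by positivity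
  have hB : ((1 + x ^ 2 : ℝ) : ℂ) ≠ 0 := by exact_mod_cast h1.ne'
  have hb : ((x : ℂ) ^ 2 + 1) = ((1 + x ^ 2 : ℝ) : ℂ) := by push_cast; ring
  have hfac : ((1 + x ^ 2 : ℝ) : ℂ) = ((x : ℂ) + Complex.I) * ((x : ℂ) - Complex.I) := by
    push_cast
    ring_nf
    rw [Complex.I_sq]
    ring
  have hd : ((x : ℂ) + Complex.I) ≠ 0 := by
    intro h
    have := congrArg Complex.im h
    simp at this
  have hneg : (-(s + 1/2) : ℂ) = ((1/2 : ℂ) - s) - 1 := by ring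
  rw [hb]
  conv_rhs => rw [hneg, Complex.cpow_sub _ _ hB, Complex.cpow_one]
  have hx' : (x:ℂ) - Complex.I ≠ 0 := by
    intro h
    have := congrArg Complex.im h
    simp at this
  rw [hfac]
  field_simp

open MeasureTheory Set Complex in
private lemma whittaker_odd (s : ℂ) :
    ∫ x : ℝ, (x : ℂ) * ((1 + x ^ 2 : ℝ) : ℂ) ^ (-(s + 1/2)) = 0 := by
  set F := fun x : ℝ => (x : ℂ) * ((1 + x ^ 2 : ℝ) : ℂ) ^ (-(s + 1/2)) with hF
  have h1 : ∫ x : ℝ, F (-x) = ∫ x : ℝ, F x := integral_neg_eq_self F volume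
  have h2 : ∀ x : ℝ, F (-x) = -F x := by
    intro x
    simp only [hF]
    have : ((-x:ℝ)^2) = x^2 := by ring
    rw [this]
    push_cast
    ring
  rw [integral_congr_ae (Filter.Eventually.of_forall h2)] at h1
  rw [integral_neg] at h1
  have := h1.symm
  rwa [CharZero.eq_neg_self_iff] at this

open MeasureTheory Set Complex in
private lemma whittaker_even (s : ℂ) (hs : 1 / 2 < s.re) :
    ∫ x : ℝ, ((1 + x ^ 2 : ℝ) : ℂ) ^ (-(s + 1/2)) = Complex.betaIntegral s (1/2) := by
  have hGint := whittaker_integrable_G s hs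
  set G := fun x : ℝ => ((1 + x ^ 2 : ℝ) : ℂ) ^ (-(s + 1/2)) with hG
  have hderiv : ∀ x ∈ Ioi (0:ℝ), HasDerivWithinAt (fun x : ℝ => (1 + x ^ 2)⁻¹)
      (-(2*x)/(1+x^2)^2) (Ioi 0) x := by
    intro x _
    have h1 : HasDerivAt (fun x : ℝ => 1 + x ^ 2) (2*x) x := by
      simpa using (hasDerivAt_pow 2 x).const_add 1
    have := h1.inv (by positivity)
    exact this.hasDerivWithinAt
  have hinj : InjOn (fun x : ℝ => (1 + x ^ 2)⁻¹) (Ioi 0) := by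
    intro x hx y hy h
    simp only at h
    have h2 : 1 + x^2 = 1 + y^2 := by
      have := congrArg (·⁻¹) h
      simpa [inv_inv] using this
    have hx0 : (0:ℝ) < x := hx
    have hy0 : (0:ℝ) < y := hy
    nlinarith [sq_nonneg (x - y), sq_nonneg (x + y)]
  have hcv := integral_image_eq_integral_abs_deriv_smul measurableSet_Ioi hderiv hinj
    (fun t : ℝ => (t : ℂ) ^ (s - 1) * (1 - (t : ℂ)) ^ ((1/2 : ℂ) - 1))
  rw [whittaker_sq_image] at hcv
  have hcv2 : ∫ t in Ioo (0:ℝ) 1, (t : ℂ) ^ (s - 1) * (1 - (t : ℂ)) ^ ((1/2 : ℂ) - 1)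
      = ∫ x in Ioi (0:ℝ), 2 * G x := by
    rw [hcv]
    refine setIntegral_congr_fun measurableSet_Ioi fun x hx => ?_
    exact whittaker_pointwise_cv s hx
  have hbeta : Complex.betaIntegral s (1/2)
      = ∫ t in Ioo (0:ℝ) 1, (t : ℂ) ^ (s - 1) * (1 - (t : ℂ)) ^ ((1/2 : ℂ) - 1) := by
    rw [Complex.betaIntegral, intervalIntegral.integral_of_le zero_le_one,
      integral_Ioc_eq_integral_Ioo]
  have hsym : ∫ x : ℝ, G x = 2 * ∫ x in Ioi (0:ℝ), G x := by
    have hsplit := intervalIntegral.integral_Iic_add_Ioi (b := (0:ℝ))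
      hGint.integrableOn hGint.integrableOn
    have hneg : ∫ x in Iic (0:ℝ), G x = ∫ x in Ioi (0:ℝ), G x := by
      have h0 := integral_comp_neg_Ioi (0:ℝ) G
      rw [neg_zero] at h0
      rw [← h0]
      refine setIntegral_congr_fun measurableSet_Ioi fun x _ => ?_
      have hxx : (1 + (-x)^2 : ℝ) = 1 + x^2 := by ring
      simp only [hG, hxx]
    rw [← hsplit, hneg]
    ring
  rw [hsym, hbeta, hcv2, integral_const_mul]

/-- The archimedean Whittaker integral at `y = 0`: for `Re(s) > 1/2`,
`∫_ℝ (x²+1)^{1/2−s}/(x+i) dx` converges absolutely and equals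
`−i√π·Γ(s)/Γ(s+1/2)`. -/
theorem whittaker_integral_at_zero (s : ℂ) (hs : 1 / 2 < s.re) :
    MeasureTheory.Integrable
        (fun x : ℝ => ((x : ℂ) ^ 2 + 1) ^ ((1 / 2 : ℂ) - s) / (x + Complex.I)) ∧
    ∫ x : ℝ, ((x : ℂ) ^ 2 + 1) ^ ((1 / 2 : ℂ) - s) / (x + Complex.I)
      = -Complex.I * Real.sqrt Real.pi * Complex.Gamma s / Complex.Gamma (s + 1 / 2) := by
  open MeasureTheory Set Complex in
  refine ⟨whittaker_integrable_f s hs, ?_⟩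
  have hGint := whittaker_integrable_G s hs
  have hfint := whittaker_integrable_f s hs
  have hXG : Integrable (fun x : ℝ => (x : ℂ) * ((1 + x ^ 2 : ℝ) : ℂ) ^ (-(s + 1/2))) := by
    refine (hfint.add (hGint.const_mul Complex.I)).congr
      (Filter.Eventually.of_forall fun x => ?_)
    simp only [Pi.add_apply]
    rw [whittaker_f_rewrite s x]
    ring
  have step1 : ∫ x : ℝ, ((x : ℂ) ^ 2 + 1) ^ ((1 / 2 : ℂ) - s) / (x + Complex.I)
      = (∫ x : ℝ, (x : ℂ) * ((1 + x ^ 2 : ℝ) : ℂ) ^ (-(s + 1/2)))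
        - Complex.I * ∫ x : ℝ, ((1 + x ^ 2 : ℝ) : ℂ) ^ (-(s + 1/2)) := by
    rw [← integral_const_mul, ← integral_sub hXG (hGint.const_mul Complex.I)]
    refine integral_congr_ae (Filter.Eventually.of_forall fun x => ?_)
    simp only
    rw [whittaker_f_rewrite s x]
    ring
  rw [step1, whittaker_odd s, whittaker_even s hs, zero_sub]
  -- evaluate the beta integral
  have hs0 : 0 < s.re := by linarith
  have hhalf : 0 < ((1:ℂ)/2).re := by norm_num
  have hbeta := Complex.Gamma_mul_Gamma_eq_betaIntegral hs0 hhalf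
  have hne : Complex.Gamma (s + 1/2) ≠ 0 := by
    refine Complex.Gamma_ne_zero fun m => ?_
    intro h
    have := congrArg Complex.re h
    simp [Complex.add_re] at this
    norm_num at this
    nlinarith [this, (Nat.cast_nonneg m : (0:ℝ) ≤ m)]
  have hβval : Complex.betaIntegral s (1/2)
      = Complex.Gamma s * Complex.Gamma (1/2) / Complex.Gamma (s + 1/2) := by
    rw [eq_div_iff hne, mul_comm (Complex.betaIntegral s (1/2)) _, ← hbeta]
  rw [hβval, Complex.Gamma_one_half_eq]
  have hsqrt : ((Real.sqrt Real.pi : ℝ) : ℂ) = (Real.pi : ℂ) ^ (1/2 : ℂ) := by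
    rw [Real.sqrt_eq_rpow, Complex.ofReal_cpow Real.pi_pos.le]
    norm_num
  rw [hsqrt]
  field_simp
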